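/- Let m = n ≥ 2 and ψ an approximating function. If X ∈ [-1/2,1/2]^{m²}, viewed as an m×m real matrix, satisfies |qX|_∞ < ψ(|q|_∞) for infinitely many q ∈ ℤᵐ \ {0}, then det X = 0. -/

import Mathlib

open MeasureTheory Filter

noncomputable def qnorm {m : ℕ} (q : Fin m → ℤ) : ℝ := ‖(fun i => (q i : ℝ) : Fin m → ℝ)‖

def cube (m n : ℕ) : Set (Fin m → Fin n → ℝ) :=
  {X | ∀ i j, X i j ∈ Set.Icc (-(1/2) : ℝ) (1/2)}

def W0 (m n : ℕ) (ψ : ℝ → ℝ) : Set (Fin m → Fin n → ℝ) :=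
  {X | X ∈ cube m n ∧
    {q : Fin m → ℤ | q ≠ 0 ∧
      ‖(fun j => ∑ i, (q i : ℝ) * X i j : Fin n → ℝ)‖ < ψ (qnorm q)}.Infinite}

noncomputable def Hf {α : Type*} [EMetricSpace α] [MeasurableSpace α] [BorelSpace α]
    (f : ℝ → ℝ) : Measure α :=
  Measure.mkMetric (fun d => ENNReal.ofReal (f d.toReal))

lemma finite_ball (m : ℕ) (R : ℝ) : {q : Fin m → ℤ | qnorm q ≤ R}.Finite := by
  have : {q : Fin m → ℤ | qnorm q ≤ R} ⊆
      Set.pi Set.univ (fun _ : Fin m => Set.Icc (-⌈R⌉) ⌈R⌉) := by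
    intro q hq i _
    have h1 : |(q i : ℝ)| ≤ R := by
      have := norm_le_pi_norm (fun i => (q i : ℝ) : Fin m → ℝ) i
      simp only [Real.norm_eq_abs] at this
      exact this.trans hq
    have h2 : |q i| ≤ ⌈R⌉ := by
      have h3 : ((|q i| : ℤ) : ℝ) ≤ (⌈R⌉ : ℝ) := by
        push_cast
        exact h1.trans (Int.le_ceil R)
      exact_mod_cast h3
    exact Set.mem_Icc.mpr ⟨neg_le_of_abs_le h2, le_of_abs_le h2⟩
  exact (Set.Finite.pi (fun _ => Set.finite_Icc _ _)).subset this

theorem stmt6 (m : ℕ) (hm : 2 ≤ m) (ψ : ℝ → ℝ)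
    (hψ : AntitoneOn ψ (Set.Ioi 0)) (hψpos : ∀ r > 0, 0 < ψ r)
    (hψ0 : Tendsto ψ atTop (nhds 0))
    (X : Fin m → Fin m → ℝ) (hX : X ∈ W0 m m ψ) :
    Matrix.det (Matrix.of X) = 0 := by
  by_contra hdet
  set M : Matrix (Fin m) (Fin m) ℝ := Matrix.of X with hM
  have hunit : IsUnit M.det := isUnit_iff_ne_zero.mpr hdet
  -- continuous linear map for vecMul by M⁻¹
  let L : (Fin m → ℝ) →L[ℝ] (Fin m → ℝ) :=
    LinearMap.toContinuousLinearMap (M⁻¹.vecMulLinear)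
  set C := ‖L‖ with hC
  have hCnn : 0 ≤ C := norm_nonneg _
  have key : ∀ v : Fin m → ℝ, ‖v‖ ≤ C * ‖Matrix.vecMul v M‖ := by
    intro v
    have : L (Matrix.vecMul v M) = v := by
      simp only [L, LinearMap.coe_toContinuousLinearMap', Matrix.vecMulLinear_apply,
        Matrix.vecMul_vecMul, Matrix.mul_nonsing_inv M hunit, Matrix.vecMul_one]
    calc ‖v‖ = ‖L (Matrix.vecMul v M)‖ := by rw [this]
      _ ≤ C * ‖Matrix.vecMul v M‖ := L.le_opNorm _
  -- ψ eventually small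
  have hε : (0:ℝ) < 1 / (C + 1) := by positivity
  obtain ⟨R, hR⟩ : ∃ R, ∀ r ≥ R, ψ r < 1 / (C + 1) := by
    have h := hψ0.eventually_lt_const hε
    rw [eventually_atTop] at h
    exact h
  obtain ⟨hXc, hinf⟩ := hX
  obtain ⟨q, hqS, hqR⟩ : ∃ q, q ∈ {q : Fin m → ℤ | q ≠ 0 ∧
      ‖(fun j => ∑ i, (q i : ℝ) * X i j : Fin m → ℝ)‖ < ψ (qnorm q)} ∧ R < qnorm q := by
    by_contra h
    push_neg at h
    exact hinf ((finite_ball m R).subset (fun q hq => h q hq))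
  obtain ⟨hq0, hqlt⟩ := hqS
  -- norm of q at least 1
  have hq1 : (1:ℝ) ≤ qnorm q := by
    obtain ⟨i, hi⟩ := Function.ne_iff.mp hq0
    have h1 : (1:ℝ) ≤ |(q i : ℝ)| := by
      rw [← Int.cast_abs]
      exact_mod_cast Int.one_le_abs hi
    have := norm_le_pi_norm (fun i => (q i : ℝ) : Fin m → ℝ) i
    simp only [Real.norm_eq_abs] at this
    exact h1.trans this
  -- the vector qX
  have hvec : (fun j => ∑ i, (q i : ℝ) * X i j : Fin m → ℝ)
      = Matrix.vecMul (fun i => (q i : ℝ)) M := by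
    funext j
    simp [Matrix.vecMul, dotProduct, hM]
  have hbound := key (fun i => (q i : ℝ))
  rw [← hvec] at hbound
  have hψsmall : ψ (qnorm q) < 1 / (C + 1) := hR _ hqR.le
  have : (1:ℝ) ≤ C * (1 / (C + 1)) := by
    calc (1:ℝ) ≤ qnorm q := hq1
      _ ≤ C * ‖(fun j => ∑ i, (q i : ℝ) * X i j : Fin m → ℝ)‖ := hbound
      _ ≤ C * (1 / (C + 1)) := by
          apply mul_le_mul_of_nonneg_left _ hCnn
          exact (hqlt.trans hψsmall).le
  have : C / (C + 1) < 1 := by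
    rw [div_lt_one (by linarith)]; linarith
  rw [mul_one_div] at *
  linarith
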